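/- Let n ≥ 5 and let P = {t_1, t_2} be the pot over the single bond-edge type a with t_1 = {a, â, â} (one unhatted a and two hatted a) and t_2 = {a^{n-1}} (n−1 unhatted a). Then the wheel graph W_n is realized by P, using one copy of tile t_2 (on the hub) and n−1 copies of tile t_1 (on the outer-cycle vertices). -/

import Mathlib

/-!
Basic framework for flexible-tile DNA self-assembly.

Bond-edge types are elements of `Fin m`.  A cohesive end is either unhatted
(`Sum.inl a`) or hatted (`Sum.inr a`).  A tile is a finite multiset of cohesive
ends, and a pot is a finite set of tiles.
-/

/-- A tile over the bond-edge alphabet `Fin m`. -/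
abbrev Tile (m : ℕ) : Type := Multiset (Fin m ⊕ Fin m)

/-- A pot: a finite set of tiles over the alphabet `Fin m`. -/
abbrev Pot (m : ℕ) : Type := Finset (Tile m)

/-- A finite multigraph (nonempty finite vertex set, finite edge set; loops and
parallel edges allowed), edges recorded by their unordered pair of endpoints. -/
structure Multigraph where
  V : Type
  E : Type
  [fintypeV : Fintype V]
  [decEqV : DecidableEq V]
  [nonemptyV : Nonempty V]
  [fintypeE : Fintype E]
  ends : E → Sym2 V

attribute [instance] Multigraph.fintypeV Multigraph.decEqV
  Multigraph.nonemptyV Multigraph.fintypeE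

/-- The order (number of vertices) of a multigraph. -/
def Multigraph.order (G : Multigraph) : ℕ := Fintype.card G.V

/-- An assembly of `G` from tiles over `Fin m`: each edge gets an orientation
(an ordered pair of vertices compatible with its endpoints) and a bond-edge type. -/
structure Assembly (m : ℕ) (G : Multigraph) where
  orient : G.E → G.V × G.V
  label : G.E → Fin m
  orient_ends : ∀ e : G.E, G.ends e = s((orient e).1, (orient e).2)

/-- The tile of a vertex `v` under an assembly: one unhatted `a` for each edge
labeled `a` oriented out of `v`, one hatted `a` for each edge labeled `a`
oriented into `v`. -/
def Assembly.tileOf {m : ℕ} {G : Multigraph} (A : Assembly m G) (v : G.V) : Tile m :=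
  (Finset.univ : Finset G.E).val.bind fun e =>
    (if (A.orient e).1 = v then {Sum.inl (A.label e)} else 0) +
    (if (A.orient e).2 = v then {Sum.inr (A.label e)} else 0)

/-- `G` is realized by the pot `P`: there is an assembly of `G` all of whose
vertex tiles belong to `P`. -/
def Realizes {m : ℕ} (P : Pot m) (G : Multigraph) : Prop :=
  ∃ A : Assembly m G, ∀ v : G.V, A.tileOf v ∈ P

/-- `C(P)`: the class of multigraphs realized by `P`. -/
def CSet {m : ℕ} (P : Pot m) : Set Multigraph := {G | Realizes P G}

/-- `m_P`: the minimum order of a multigraph realized by `P`. -/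
noncomputable def mP {m : ℕ} (P : Pot m) : ℕ :=
  sInf {n | ∃ G ∈ CSet P, G.order = n}

/-- `C_min(P)`: the multigraphs realized by `P` of minimum order. -/
def Cmin {m : ℕ} (P : Pot m) : Set Multigraph :=
  {G ∈ CSet P | G.order = mP P}

/-- An isomorphism of multigraphs. -/
structure MultigraphIso (G H : Multigraph) where
  vEquiv : G.V ≃ H.V
  eEquiv : G.E ≃ H.E
  ends_eq : ∀ e : G.E, H.ends (eEquiv e) = (G.ends e).map vEquiv

/-- Two multigraphs are isomorphic. -/
def Isomorphic (G H : Multigraph) : Prop := Nonempty (MultigraphIso G H)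

/-- Scenario 1: minimum number of tile types over all pots realizing `G`. -/
noncomputable def T1 (G : Multigraph) : ℕ :=
  sInf {c | ∃ m : ℕ, ∃ P : Pot m, Realizes P G ∧ P.card = c}

/-- Scenario 1: minimum number of bond-edge types over all pots realizing `G`. -/
noncomputable def B1 (G : Multigraph) : ℕ :=
  sInf {m | ∃ P : Pot m, Realizes P G}

/-- Scenario 2: minimum number of tile types over pots `P` with `G ∈ C(P)` and
`m_P = |V(G)|`. -/
noncomputable def T2 (G : Multigraph) : ℕ :=
  sInf {c | ∃ m : ℕ, ∃ P : Pot m, Realizes P G ∧ mP P = G.order ∧ P.card = c}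

/-- Scenario 2: minimum number of bond-edge types over pots `P` with `G ∈ C(P)`
and `m_P = |V(G)|`. -/
noncomputable def B2 (G : Multigraph) : ℕ :=
  sInf {m | ∃ P : Pot m, Realizes P G ∧ mP P = G.order}

/-- Scenario 3: minimum number of tile types over pots `P` with `C_min(P)`
consisting exactly of the multigraphs isomorphic to `G`. -/
noncomputable def T3 (G : Multigraph) : ℕ :=
  sInf {c | ∃ m : ℕ, ∃ P : Pot m, Cmin P = {H | Isomorphic H G} ∧ P.card = c}

/-- Scenario 3: minimum number of bond-edge types over pots `P` with `C_min(P)`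
consisting exactly of the multigraphs isomorphic to `G`. -/
noncomputable def B3 (G : Multigraph) : ℕ :=
  sInf {m | ∃ P : Pot m, Cmin P = {H | Isomorphic H G}}

/-- The degree of a vertex (a loop contributes 2). -/
def Multigraph.degree (G : Multigraph) (v : G.V) : ℕ :=
  ∑ e : G.E, (if v ∈ G.ends e then (if (G.ends e).IsDiag then 2 else 1) else 0)

/-- `av(G)`: the number of distinct vertex degrees in `G`. -/
def av (G : Multigraph) : ℕ := (Finset.univ.image G.degree).card

/-- `ev(G)`: the number of distinct even vertex degrees in `G`. -/
def ev (G : Multigraph) : ℕ :=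
  ((Finset.univ.image G.degree).filter (fun d => Even d)).card

/-- `ov(G)`: the number of distinct odd vertex degrees in `G`. -/
def ov (G : Multigraph) : ℕ :=
  ((Finset.univ.image G.degree).filter (fun d => Odd d)).card

/-- `z i t`: the net number of cohesive ends of type `i` on tile `t`
(unhatted count minus hatted count). -/
def zval {m : ℕ} (i : Fin m) (t : Tile m) : ℤ :=
  (t.count (Sum.inl i) : ℤ) - (t.count (Sum.inr i) : ℤ)

/-- The wheel graph on `n` vertices: the hub is `none`; the outer-cycle
vertices are `some i` for `i : Fin (n-1)`.  Edge `Sum.inl i` is the spoke from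
the hub to `some i`; edge `Sum.inr i` is the outer-cycle edge from `some i` to
`some ((i+1) mod (n-1))`. -/
def wheel (n : ℕ) : Multigraph where
  V := Option (Fin (n - 1))
  E := Fin (n - 1) ⊕ Fin (n - 1)
  ends e :=
    match e with
    | Sum.inl i => s((none : Option (Fin (n - 1))), some i)
    | Sum.inr i => s(some i,
        some ⟨(i.val + 1) % (n - 1), Nat.mod_lt _ (by have := i.isLt; omega)⟩)

/-- The cycle graph on `n` vertices (vertices `none, some 0, …, some (n-2)`,
edge `k` joining the `k`-th and `(k+1 mod n)`-th vertices in this order). -/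
def cycleVtx (n : ℕ) (k : Fin n) : Option (Fin (n - 1)) :=
  if h : k.val = 0 then none else some ⟨k.val - 1, by have := k.isLt; omega⟩

def cycleGraph (n : ℕ) : Multigraph where
  V := Option (Fin (n - 1))
  E := Fin n
  ends k := s(cycleVtx n k,
    cycleVtx n ⟨(k.val + 1) % n, Nat.mod_lt _ (by have := k.isLt; omega)⟩)

lemma tileOf_eq_sum {m : ℕ} {G : Multigraph} (A : Assembly m G) (v : G.V) :
    A.tileOf v = ∑ e : G.E,
      ((if (A.orient e).1 = v then {Sum.inl (A.label e)} else 0) +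
       (if (A.orient e).2 = v then {Sum.inr (A.label e)} else 0)) := rfl

def wheelAssembly (n : ℕ) : Assembly 1 (wheel n) where
  orient e :=
    match e with
    | Sum.inl i => (none, some i)
    | Sum.inr i => (some i,
        some ⟨(i.val + 1) % (n - 1), Nat.mod_lt _ (by have := i.isLt; omega)⟩)
  label _ := 0
  orient_ends e := by cases e <;> rfl

lemma wheelAssembly_tileOf (n : ℕ) (hn : 5 ≤ n) (v : Option (Fin (n-1))) :
    (wheelAssembly n).tileOf v =
      (∑ i : Fin (n-1),
         ((if (none : Option (Fin (n-1))) = v then ({Sum.inl (0:Fin 1)} : Tile 1) else 0) +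
          (if (some i : Option (Fin (n-1))) = v then {Sum.inr (0:Fin 1)} else 0))) +
      (∑ i : Fin (n-1),
         ((if (some i : Option (Fin (n-1))) = v then ({Sum.inl (0:Fin 1)} : Tile 1) else 0) +
          (if (some ⟨(i.val+1)%(n-1), Nat.mod_lt _ (by have := i.isLt; omega)⟩ : Option (Fin (n-1))) = v
            then {Sum.inr (0:Fin 1)} else 0))) := by
  erw [tileOf_eq_sum]
  erw [Fintype.sum_sum_type]
  rfl

lemma wheelAssembly_tileOf_none (n : ℕ) (hn : 5 ≤ n) :
    (wheelAssembly n).tileOf (none : Option (Fin (n-1))) =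
      Multiset.replicate (n - 1) (Sum.inl (0 : Fin 1)) := by
  rw [wheelAssembly_tileOf n hn]
  simp
  exact Multiset.nsmul_singleton _ _

lemma wheelAssembly_tileOf_some (n : ℕ) (hn : 5 ≤ n) (j : Fin (n-1)) :
    (wheelAssembly n).tileOf (some j) =
      ({Sum.inl 0, Sum.inr 0, Sum.inr 0} : Tile 1) := by
  haveI : NeZero (n-1) := ⟨by omega⟩
  rw [wheelAssembly_tileOf n hn]
  have hmod : ∀ (x : Fin (n-1)) (h : (x.val+1) % (n-1) < n-1),
      (⟨(x.val+1) % (n-1), h⟩ : Fin (n-1)) = x + 1 := by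
    intro x h
    apply Fin.ext
    simp [Fin.val_add, Fin.val_one', Nat.mod_eq_of_lt (show 1 < n-1 by omega)]
  have hrw : ∀ x : Fin (n-1), (x + 1 = j) ↔ x = j - 1 := fun x => by
    rw [eq_sub_iff_add_eq]
  simp_rw [hmod, Option.some.injEq, hrw, reduceCtorEq, if_false, zero_add,
    Finset.sum_add_distrib, Finset.sum_ite_eq' Finset.univ, Finset.mem_univ, if_true]
  decide

/-- For `n ≥ 5`, the pot `P = {t₁, t₂}` over one bond-edge type, with
`t₁ = {a, â, â}` and `t₂ = {a^{n-1}}`, realizes the wheel graph `W_n` using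
tile `t₂` on the hub (`none`) and tile `t₁` on each of the `n-1` outer-cycle
vertices. -/
theorem wheel_realized_scenario12_pot (n : ℕ) (hn : 5 ≤ n) :
    ∃ A : Assembly 1 (wheel n),
      (∀ v, A.tileOf v ∈
        ({({Sum.inl 0, Sum.inr 0, Sum.inr 0} : Tile 1),
          Multiset.replicate (n - 1) (Sum.inl (0 : Fin 1))} : Pot 1)) ∧
      A.tileOf (none : Option (Fin (n - 1))) =
        Multiset.replicate (n - 1) (Sum.inl (0 : Fin 1)) ∧
      ∀ i : Fin (n - 1),
        A.tileOf (some i) = ({Sum.inl 0, Sum.inr 0, Sum.inr 0} : Tile 1) := by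
  refine ⟨wheelAssembly n, ?_, wheelAssembly_tileOf_none n hn,
    wheelAssembly_tileOf_some n hn⟩
  intro v
  match v with
  | none =>
      rw [wheelAssembly_tileOf_none n hn]
      exact Finset.mem_insert_of_mem (Finset.mem_singleton_self _)
  | some j =>
      rw [wheelAssembly_tileOf_some n hn]
      exact Finset.mem_insert_self _ _
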